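/- Every ∃∀-formula with exactly one free variable is equivalent over all chains to a TL(U,S) formula. Specifically, the formula [α₀,β₁,α₁,…,β_n,α_n with end conditions β₀ before x₀ and β_{n+1} after x_n], with free variable z₀ = x_k, is equivalent to the conjunction of A_k ∧ (B_{k+1} U (A_{k+1} ∧ (B_{k+2} U ⋯ (A_n ∧ G B_{n+1})⋯))) and A_k ∧ (B_{k-1} S (A_{k-1} ∧ ⋯ (A₀ ∧ G⁻ B₀)⋯)), where A_i, B_i are the propositional temporal formulas corresponding to the quantifier-free α_i, β_i. -/

import Mathlib

/-- Syntax of the temporal logic TL(U,S) with strict Until and strict Since. -/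
inductive TL (σ : Type) : Type
  | tt : TL σ
  | atom : σ → TL σ
  | neg : TL σ → TL σ
  | or : TL σ → TL σ → TL σ
  | and : TL σ → TL σ → TL σ
  | until_ : TL σ → TL σ → TL σ
  | since : TL σ → TL σ → TL σ

/-- Semantics of TL(U,S) over a chain: a linear order `T` with interpretation `I`. -/
def TL.sat {σ T : Type} [LinearOrder T] (I : σ → Set T) : TL σ → T → Prop
  | .tt, _ => True
  | .atom p, t => t ∈ I p
  | .neg F, t => ¬ TL.sat I F t
  | .or F G, t => TL.sat I F t ∨ TL.sat I G t
  | .and F G, t => TL.sat I F t ∧ TL.sat I G t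
  | .until_ F G, t => ∃ t', t < t' ∧ TL.sat I G t' ∧ ∀ s, t < s → s < t' → TL.sat I F s
  | .since F G, t => ∃ t', t' < t ∧ TL.sat I G t' ∧ ∀ s, t' < s → s < t → TL.sat I F s

/-- K⁻(F) := ¬((¬F) S True). -/
def TL.kminus {σ : Type} (F : TL σ) : TL σ := .neg (.since (.neg F) .tt)

/-- K⁺(F) := ¬((¬F) U True). -/
def TL.kplus {σ : Type} (F : TL σ) : TL σ := .neg (.until_ (.neg F) .tt)

/-- G F := ¬(True U ¬F): F holds everywhere strictly after the current point. -/
def TL.G {σ : Type} (F : TL σ) : TL σ := .neg (.until_ .tt (.neg F))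

/-- G⁻ F := ¬(True S ¬F): F holds everywhere strictly before the current point. -/
def TL.Gm {σ : Type} (F : TL σ) : TL σ := .neg (.since .tt (.neg F))

/-- Syntax of FOMLO: first-order monadic logic of order (variables are natural numbers). -/
inductive FO (σ : Type) : Type
  | lt : ℕ → ℕ → FO σ
  | eq : ℕ → ℕ → FO σ
  | atom : σ → ℕ → FO σ
  | neg : FO σ → FO σ
  | or : FO σ → FO σ → FO σ
  | and : FO σ → FO σ → FO σ
  | ex : ℕ → FO σ → FO σ
  | all : ℕ → FO σ → FO σ

/-- Semantics of FOMLO over a chain, with a valuation of the variables. -/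
def FO.sat {σ T : Type} [LinearOrder T] (I : σ → Set T) : FO σ → (ℕ → T) → Prop
  | .lt i j, v => v i < v j
  | .eq i j, v => v i = v j
  | .atom p i, v => v i ∈ I p
  | .neg φ, v => ¬ FO.sat I φ v
  | .or φ ψ, v => FO.sat I φ v ∨ FO.sat I ψ v
  | .and φ ψ, v => FO.sat I φ v ∧ FO.sat I ψ v
  | .ex i φ, v => ∃ t, FO.sat I φ (Function.update v i t)
  | .all i φ, v => ∀ t, FO.sat I φ (Function.update v i t)

/-- Free variables of a FOMLO formula. -/
def FO.freeVars {σ : Type} : FO σ → Set ℕ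
  | .lt i j => {i, j}
  | .eq i j => {i, j}
  | .atom _ i => {i}
  | .neg φ => φ.freeVars
  | .or φ ψ => φ.freeVars ∪ ψ.freeVars
  | .and φ ψ => φ.freeVars ∪ ψ.freeVars
  | .ex i φ => φ.freeVars \ {i}
  | .all i φ => φ.freeVars \ {i}

/-- Quantifier-free one-variable (propositional) formulas over the monadic predicates. -/
inductive QF (σ : Type) : Type
  | tt : QF σ
  | atom : σ → QF σ
  | neg : QF σ → QF σ
  | or : QF σ → QF σ → QF σ
  | and : QF σ → QF σ → QF σ

def QF.sat {σ T : Type} (I : σ → Set T) : QF σ → T → Prop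
  | .tt, _ => True
  | .atom p, t => t ∈ I p
  | .neg φ, t => ¬ QF.sat I φ t
  | .or φ ψ, t => QF.sat I φ t ∨ QF.sat I ψ t
  | .and φ ψ, t => QF.sat I φ t ∧ QF.sat I ψ t

/-- The propositional temporal formula corresponding to a quantifier-free formula. -/
def QF.toTL {σ : Type} : QF σ → TL σ
  | .tt => .tt
  | .atom p => .atom p
  | .neg φ => .neg φ.toTL
  | .or φ ψ => .or φ.toTL ψ.toTL
  | .and φ ψ => .and φ.toTL ψ.toTL

/-- An ∃∀-formula over the monadic signature `σ` with free variables `z₀,…,z_m`: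
`∃ x_n … x₀, (⋀_k z_k = x_{idx k}) ∧ x₀ < … < x_n ∧ ⋀_j α_j(x_j) ∧`
each `βmid j` holds throughout the open interval `(x_j, x_{j+1})`,
`βhi` holds everywhere after `x_n`, and `βlo` holds everywhere before `x₀`. -/
structure EAForm (σ : Type) (m : ℕ) where
  n : ℕ
  idx : Fin (m + 1) → Fin (n + 1)
  α : Fin (n + 1) → QF σ
  βmid : Fin n → QF σ
  βlo : QF σ
  βhi : QF σ

/-- Semantics of ∃∀-formulas. -/
def EAForm.sat {σ : Type} {m : ℕ} {T : Type} [LinearOrder T] (e : EAForm σ m)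
    (I : σ → Set T) (z : Fin (m + 1) → T) : Prop :=
  ∃ x : Fin (e.n + 1) → T, StrictMono x ∧
    (∀ k, z k = x (e.idx k)) ∧
    (∀ j, (e.α j).sat I (x j)) ∧
    (∀ j : Fin e.n, ∀ y, x j.castSucc < y → y < x j.succ → (e.βmid j).sat I y) ∧
    (∀ y, y < x 0 → e.βlo.sat I y) ∧
    (∀ y, x (Fin.last e.n) < y → e.βhi.sat I y)

/-- Satisfaction of a disjunction of ∃∀-formulas. -/
def EADisj {σ : Type} {m : ℕ} {T : Type} [LinearOrder T] (L : List (EAForm σ m))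
    (I : σ → Set T) (z : Fin (m + 1) → T) : Prop :=
  ∃ f ∈ L, f.sat I z

/-- A linear order is Dedekind complete if every nonempty bounded-above subset has a
least upper bound and every nonempty bounded-below subset has a greatest lower bound. -/
def DedekindComplete (T : Type) [LinearOrder T] : Prop :=
  (∀ S : Set T, S.Nonempty → BddAbove S → ∃ a, IsLUB S a) ∧
  (∀ S : Set T, S.Nonempty → BddBelow S → ∃ a, IsGLB S a)

/-- The canonical TL(U,S)-expansion of a chain: one unary predicate for each
TL(U,S)-formula `A`, interpreted as the set of points satisfying `A`. -/
def canonExp {σ T : Type} [LinearOrder T] (I : σ → Set T) : TL σ → Set T :=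
  fun A => {t | A.sat I t}

/-- `[α₀,β₁,α₁,…,β_n,α_n](z₀,z₁)` : there are `z₀ = x₀ < x₁ < … < x_n = z₁` with each
`a j` holding at `x_j` and `b j` holding throughout `(x_j, x_{j+1})`
(`b j` stands for `β_{j+1}`). -/
def chainSat {σ T : Type} [LinearOrder T] (I : σ → Set T) (n : ℕ) (a b : ℕ → QF σ)
    (z₀ z₁ : T) : Prop :=
  ∃ x : Fin (n + 1) → T, x 0 = z₀ ∧ x (Fin.last n) = z₁ ∧ StrictMono x ∧
    (∀ j : Fin (n + 1), (a j.val).sat I (x j)) ∧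
    (∀ j : Fin n, ∀ y, x j.castSucc < y → y < x j.succ → (b j.val).sat I y)

/-- `nestU [(B₁,A₁),…,(B_k,A_k)] tail = B₁ U (A₁ ∧ (B₂ U (A₂ ∧ … (B_k U (A_k ∧ tail))…)))`. -/
def nestU {σ : Type} : List (TL σ × TL σ) → TL σ → TL σ
  | [], tail => tail
  | (B, A) :: rest, tail => B.until_ (A.and (nestU rest tail))

/-- `nestS [(B₁,A₁),…,(B_k,A_k)] tail = B₁ S (A₁ ∧ (B₂ S (A₂ ∧ … (B_k S (A_k ∧ tail))…)))`. -/
def nestS {σ : Type} : List (TL σ × TL σ) → TL σ → TL σ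
  | [], tail => tail
  | (B, A) :: rest, tail => B.since (A.and (nestS rest tail))

/-- `α_i` as a temporal formula, extended by `True` out of range. -/
def EAForm.aExt {σ : Type} {m : ℕ} (e : EAForm σ m) (i : ℕ) : TL σ :=
  if h : i < e.n + 1 then (e.α ⟨i, h⟩).toTL else .tt

/-- `β_{i+1}` (interval `(x_i, x_{i+1})`) as a temporal formula, `True` out of range. -/
def EAForm.bExt {σ : Type} {m : ℕ} (e : EAForm σ m) (i : ℕ) : TL σ :=
  if h : i < e.n then (e.βmid ⟨i, h⟩).toTL else .tt

/-- The future part `A_k ∧ (B_{k+1} U (A_{k+1} ∧ … (A_n ∧ G B_{n+1})…))` of the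
translation of a one-free-variable ∃∀-formula (with `z₀ = x_k`). -/
def EAForm.futureTL {σ : Type} (e : EAForm σ 0) : TL σ :=
  (e.aExt (e.idx 0).val).and
    (nestU (List.ofFn (fun j : Fin (e.n - (e.idx 0).val) =>
        (e.bExt ((e.idx 0).val + j.val), e.aExt ((e.idx 0).val + j.val + 1))))
      e.βhi.toTL.G)

/-- The past part `A_k ∧ (B_k S (A_{k-1} ∧ … (A₀ ∧ G⁻ B₀)…))` of the translation. -/
def EAForm.pastTL {σ : Type} (e : EAForm σ 0) : TL σ :=
  (e.aExt (e.idx 0).val).and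
    (nestS (List.ofFn (fun j : Fin (e.idx 0).val =>
        (e.bExt ((e.idx 0).val - 1 - j.val), e.aExt ((e.idx 0).val - 1 - j.val))))
      e.βlo.toTL.Gm)

/-- `Fseq a b n j` is the temporal formula `F_{n-j}` where `F_n := α_n` and
`F_{i-1} := α_{i-1} ∧ (β_i U F_i)`; here `b i` stands for `β_{i+1}`. -/
def Fseq {σ : Type} (a b : ℕ → QF σ) (n : ℕ) : ℕ → TL σ
  | 0 => (a n).toTL
  | j + 1 => ((a (n - j - 1)).toTL).and (((b (n - j - 1)).toTL).until_ (Fseq a b n j))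

/-- Syntax of the temporal logic TL(U,K⁻) with strict Until and the modality K⁻. -/
inductive TLK (σ : Type) : Type
  | tt : TLK σ
  | atom : σ → TLK σ
  | neg : TLK σ → TLK σ
  | or : TLK σ → TLK σ → TLK σ
  | and : TLK σ → TLK σ → TLK σ
  | until_ : TLK σ → TLK σ → TLK σ
  | kminus : TLK σ → TLK σ

/-- Semantics of TL(U,K⁻): `K⁻(F)` holds at `t` iff `t = sup{t' < t : F(t')}`. -/
def TLK.sat {σ T : Type} [LinearOrder T] (I : σ → Set T) : TLK σ → T → Prop
  | .tt, _ => True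
  | .atom p, t => t ∈ I p
  | .neg F, t => ¬ TLK.sat I F t
  | .or F G, t => TLK.sat I F t ∨ TLK.sat I G t
  | .and F G, t => TLK.sat I F t ∧ TLK.sat I G t
  | .until_ F G, t => ∃ t', t < t' ∧ TLK.sat I G t' ∧ ∀ s, t < s → s < t' → TLK.sat I F s
  | .kminus F, t => IsLUB {t' | t' < t ∧ TLK.sat I F t'} t

/-- Syntactically future TL(U,K⁻) formulas: Boolean combinations of atoms and
Until-formulas. -/
inductive SynFuture {σ : Type} : TLK σ → Prop
  | tt : SynFuture .tt
  | atom (p : σ) : SynFuture (.atom p)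
  | until_ (F G : TLK σ) : SynFuture (.until_ F G)
  | neg {F} : SynFuture F → SynFuture (.neg F)
  | or {F G} : SynFuture F → SynFuture G → SynFuture (.or F G)
  | and {F G} : SynFuture F → SynFuture G → SynFuture (.and F G)

/-- The subchain of a chain restricted to `[t₀,∞)`: the interpretation induced on the
subtype `{t // t₀ ≤ t}`. -/
def restrictI {σ T : Type} (I : σ → Set T) [LinearOrder T] (t₀ : T) :
    σ → Set {t : T // t₀ ≤ t} :=
  fun p => {s | s.val ∈ I p}

/-- A (z₀,z₁)-∃∀ formula: either `z₀ > z₁`, or `z₀ = z₁`, or a formula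
`[α₀,β₁,…,β_n,α_n](z₀,z₁)`. -/
inductive IntervalEA (σ : Type) : Type
  | gt : IntervalEA σ
  | eq : IntervalEA σ
  | chain (n : ℕ) (a b : ℕ → QF σ) : IntervalEA σ

def IntervalEA.sat {σ T : Type} [LinearOrder T] (I : σ → Set T) :
    IntervalEA σ → T → T → Prop
  | .gt, z₀, z₁ => z₁ < z₀
  | .eq, z₀, z₁ => z₀ = z₁
  | .chain n a b, z₀, z₁ => chainSat I n a b z₀ z₁

lemma QF.toTL_sat {σ T : Type} [LinearOrder T] (I : σ → Set T) (φ : QF σ) (t : T) :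
    φ.toTL.sat I t ↔ φ.sat I t := by
  induction φ <;> simp [QF.toTL, TL.sat, QF.sat, *]

lemma TL.sat_G_iff {σ T : Type} [LinearOrder T] (I : σ → Set T) (F : TL σ) (t : T) :
    F.G.sat I t ↔ ∀ s, t < s → F.sat I s := by
  simp only [TL.G, TL.sat]
  constructor
  · intro h s hs
    by_contra hF
    exact h ⟨s, hs, hF, fun _ _ _ => trivial⟩
  · rintro h ⟨s, hs, hF, -⟩
    exact hF (h s hs)

lemma TL.sat_Gm_iff {σ T : Type} [LinearOrder T] (I : σ → Set T) (F : TL σ) (t : T) :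
    F.Gm.sat I t ↔ ∀ s, s < t → F.sat I s := by
  simp only [TL.Gm, TL.sat]
  constructor
  · intro h s hs
    by_contra hF
    exact h ⟨s, hs, hF, fun _ _ _ => trivial⟩
  · rintro h ⟨s, hs, hF, -⟩
    exact hF (h s hs)

lemma nestU_cons {σ : Type} (p : TL σ × TL σ) (rest : List (TL σ × TL σ)) (tail : TL σ) :
    nestU (p :: rest) tail = p.1.until_ (p.2.and (nestU rest tail)) := by
  cases p; rfl

lemma nestS_cons {σ : Type} (p : TL σ × TL σ) (rest : List (TL σ × TL σ)) (tail : TL σ) :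
    nestS (p :: rest) tail = p.1.since (p.2.and (nestS rest tail)) := by
  cases p; rfl

lemma nestU_sat {σ T : Type} [LinearOrder T] (I : σ → Set T) (tail : TL σ) :
    ∀ (len : ℕ) (g : ℕ → TL σ × TL σ) (t : T),
    (nestU (List.ofFn fun j : Fin len => g j.val) tail).sat I t ↔
      ∃ u : ℕ → T, u 0 = t ∧ (∀ i < len, u i < u (i + 1)) ∧
        (∀ i < len, ((g i).2).sat I (u (i + 1))) ∧
        (∀ i < len, ∀ y, u i < y → y < u (i + 1) → ((g i).1).sat I y) ∧
        tail.sat I (u len)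
  | 0, g, t => by
    simp only [List.ofFn_zero, nestU]
    constructor
    · intro h
      exact ⟨fun _ => t, rfl, fun i hi => absurd hi (Nat.not_lt_zero i),
        fun i hi => absurd hi (Nat.not_lt_zero i),
        fun i hi => absurd hi (Nat.not_lt_zero i), h⟩
    · rintro ⟨u, h0, -, -, -, hl⟩
      rwa [h0] at hl
  | len + 1, g, t => by
    rw [List.ofFn_succ, nestU_cons]
    simp only [Fin.val_succ, TL.sat, nestU_sat I tail len (fun m => g (m + 1))]
    constructor
    · rintro ⟨t', ht', ⟨hA, u', h0', hlt', hA', hB', htl'⟩, hB⟩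
      refine ⟨fun i => if i = 0 then t else u' (i - 1), rfl, ?_, ?_, ?_, htl'⟩
      · intro i hi
        match i with
        | 0 => simpa [h0'] using ht'
        | j + 1 => simpa using hlt' j (by omega)
      · intro i hi
        match i with
        | 0 => simpa [h0'] using hA
        | j + 1 => simpa using hA' j (by omega)
      · intro i hi y h1 h2
        match i with
        | 0 =>
          simp only [if_pos rfl] at h1
          simp only [Nat.one_ne_zero, if_neg, Nat.sub_self] at h2
          exact hB y h1 (by rwa [h0'] at h2)
        | j + 1 =>
          simp only [Nat.succ_ne_zero, if_neg, Nat.add_sub_cancel] at h1 h2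
          exact hB' j (by omega) y h1 h2
    · rintro ⟨u, h0, hlt, hA, hB, htl⟩
      refine ⟨u 1, by rw [← h0]; exact hlt 0 (by omega), ⟨hA 0 (by omega),
        fun i => u (i + 1), rfl, fun i hi => hlt (i + 1) (by omega),
        fun i hi => hA (i + 1) (by omega), fun i hi => hB (i + 1) (by omega), htl⟩,
        fun s h1 h2 => hB 0 (by omega) s (by rwa [h0]) h2⟩

lemma nestS_sat {σ T : Type} [LinearOrder T] (I : σ → Set T) (tail : TL σ) :
    ∀ (len : ℕ) (g : ℕ → TL σ × TL σ) (t : T),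
    (nestS (List.ofFn fun j : Fin len => g j.val) tail).sat I t ↔
      ∃ u : ℕ → T, u 0 = t ∧ (∀ i < len, u (i + 1) < u i) ∧
        (∀ i < len, ((g i).2).sat I (u (i + 1))) ∧
        (∀ i < len, ∀ y, u (i + 1) < y → y < u i → ((g i).1).sat I y) ∧
        tail.sat I (u len)
  | 0, g, t => by
    simp only [List.ofFn_zero, nestS]
    constructor
    · intro h
      exact ⟨fun _ => t, rfl, fun i hi => absurd hi (Nat.not_lt_zero i),
        fun i hi => absurd hi (Nat.not_lt_zero i),
        fun i hi => absurd hi (Nat.not_lt_zero i), h⟩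
    · rintro ⟨u, h0, -, -, -, hl⟩
      rwa [h0] at hl
  | len + 1, g, t => by
    rw [List.ofFn_succ, nestS_cons]
    simp only [Fin.val_succ, TL.sat, nestS_sat I tail len (fun m => g (m + 1))]
    constructor
    · rintro ⟨t', ht', ⟨hA, u', h0', hlt', hA', hB', htl'⟩, hB⟩
      refine ⟨fun i => if i = 0 then t else u' (i - 1), rfl, ?_, ?_, ?_, htl'⟩
      · intro i hi
        match i with
        | 0 => simpa [h0'] using ht'
        | j + 1 => simpa using hlt' j (by omega)
      · intro i hi
        match i with
        | 0 => simpa [h0'] using hA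
        | j + 1 => simpa using hA' j (by omega)
      · intro i hi y h1 h2
        match i with
        | 0 =>
          simp only [if_pos rfl] at h2
          simp only [Nat.one_ne_zero, if_neg, Nat.sub_self] at h1
          exact hB y (by rwa [h0'] at h1) h2
        | j + 1 =>
          simp only [Nat.succ_ne_zero, if_neg, Nat.add_sub_cancel] at h1 h2
          exact hB' j (by omega) y h1 h2
    · rintro ⟨u, h0, hlt, hA, hB, htl⟩
      refine ⟨u 1, by rw [← h0]; exact hlt 0 (by omega), ⟨hA 0 (by omega),
        fun i => u (i + 1), rfl, fun i hi => hlt (i + 1) (by omega),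
        fun i hi => hA (i + 1) (by omega), fun i hi => hB (i + 1) (by omega), htl⟩,
        fun s h1 h2 => hB 0 (by omega) s h1 (by rwa [h0])⟩
/-- every ∃∀-formula with exactly one free variable is equivalent over all
chains to a TL(U,S) formula; specifically, to the conjunction of its future part
`A_k ∧ (B_{k+1} U (A_{k+1} ∧ … (A_n ∧ G B_{n+1})…))` and its past part
`A_k ∧ (B_k S (A_{k-1} ∧ … (A₀ ∧ G⁻ B₀)…))`. -/
theorem ea_one_var_to_tl (σ : Type) (e : EAForm σ 0) :
    (∃ A : TL σ, ∀ (T : Type) [LinearOrder T] (I : σ → Set T) (t : T),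
        e.sat I (fun _ => t) ↔ A.sat I t) ∧
    (∀ (T : Type) [LinearOrder T] (I : σ → Set T) (t : T),
        e.sat I (fun _ => t) ↔ (e.futureTL.sat I t ∧ e.pastTL.sat I t)) := by
  have main : ∀ (T : Type) [LinearOrder T] (I : σ → Set T) (t : T),
      e.sat I (fun _ => t) ↔ (e.futureTL.sat I t ∧ e.pastTL.sat I t) := by
    intro T _ I t
    have hkn : (e.idx 0).val ≤ e.n := Nat.lt_succ_iff.mp (e.idx 0).isLt
    have futIff := nestU_sat I e.βhi.toTL.G (e.n - (e.idx 0).val)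
      (fun m => (e.bExt ((e.idx 0).val + m), e.aExt ((e.idx 0).val + m + 1))) t
    have pastIff := nestS_sat I e.βlo.toTL.Gm (e.idx 0).val
      (fun m => (e.bExt ((e.idx 0).val - 1 - m), e.aExt ((e.idx 0).val - 1 - m))) t
    constructor
    · rintro ⟨x, hmono, hz, hα, hβ, hlo, hhi⟩
      have hxk : x (e.idx 0) = t := (hz 0).symm
      have xeq : ∀ {a b : ℕ} (pa : a < e.n + 1) (pb : b < e.n + 1), a = b →
          x ⟨a, pa⟩ = x ⟨b, pb⟩ := fun _ _ h => congrArg x (Fin.ext h)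
      have hAk : (e.aExt (e.idx 0).val).sat I t := by
        have h1 : (e.idx 0).val < e.n + 1 := (e.idx 0).isLt
        simp only [EAForm.aExt, dif_pos h1, QF.toTL_sat]
        rw [← hxk]
        exact hα (e.idx 0)
      refine ⟨⟨hAk, futIff.mpr ?_⟩, hAk, pastIff.mpr ?_⟩
      · -- future part
        have hpf : ∀ i : ℕ, (e.idx 0).val + min i (e.n - (e.idx 0).val) < e.n + 1 := by
          intro i; have := min_le_right i (e.n - (e.idx 0).val); omega
        refine ⟨fun i => x ⟨(e.idx 0).val + min i (e.n - (e.idx 0).val), hpf i⟩,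
          ?_, ?_, ?_, ?_, ?_⟩
        · exact (congrArg x (Fin.ext (by simp))).trans hxk
        · intro i hi
          exact hmono (Fin.mk_lt_mk.mpr (by omega))
        · intro i hi
          dsimp only
          have h1 : (e.idx 0).val + i + 1 < e.n + 1 := by omega
          simp only [EAForm.aExt, dif_pos h1, QF.toTL_sat]
          rw [xeq (hpf (i + 1)) h1 (by omega)]
          exact hα _
        · intro i hi y h1 h2
          dsimp only at h1 h2 ⊢
          have hb : (e.idx 0).val + i < e.n := by omega
          simp only [EAForm.bExt, dif_pos hb, QF.toTL_sat]
          have hβ' := hβ ⟨(e.idx 0).val + i, hb⟩ y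
          simp only [Fin.castSucc_mk, Fin.succ_mk] at hβ'
          apply hβ'
          · rwa [xeq (hpf i) (by omega : (e.idx 0).val + i < e.n + 1) (by omega)] at h1
          · rwa [xeq (hpf (i + 1)) (by omega : (e.idx 0).val + i + 1 < e.n + 1)
              (by omega)] at h2
        · dsimp only
          rw [show (⟨(e.idx 0).val + min (e.n - (e.idx 0).val) (e.n - (e.idx 0).val),
              hpf _⟩ : Fin (e.n + 1)) = Fin.last e.n from Fin.ext (by simp; omega)]
          rw [TL.sat_G_iff]
          intro s hs
          rw [QF.toTL_sat]
          exact hhi s hs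
      · -- past part
        have hpp : ∀ i : ℕ, (e.idx 0).val - i < e.n + 1 := by intro i; omega
        refine ⟨fun i => x ⟨(e.idx 0).val - i, hpp i⟩, ?_, ?_, ?_, ?_, ?_⟩
        · exact (congrArg x (Fin.ext (by simp))).trans hxk
        · intro i hi
          exact hmono (Fin.mk_lt_mk.mpr (by omega))
        · intro i hi
          dsimp only
          have h1 : (e.idx 0).val - 1 - i < e.n + 1 := by omega
          simp only [EAForm.aExt, dif_pos h1, QF.toTL_sat]
          rw [xeq (hpp (i + 1)) h1 (by omega)]
          exact hα _
        · intro i hi y h1 h2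
          dsimp only at h1 h2 ⊢
          have hb : (e.idx 0).val - 1 - i < e.n := by omega
          simp only [EAForm.bExt, dif_pos hb, QF.toTL_sat]
          have hβ' := hβ ⟨(e.idx 0).val - 1 - i, hb⟩ y
          simp only [Fin.castSucc_mk, Fin.succ_mk] at hβ'
          apply hβ'
          · rwa [xeq (hpp (i + 1)) (by omega : (e.idx 0).val - 1 - i < e.n + 1)
              (by omega)] at h1
          · rwa [xeq (hpp i) (by omega : (e.idx 0).val - 1 - i + 1 < e.n + 1)
              (by omega)] at h2
        · dsimp only
          rw [show (⟨(e.idx 0).val - (e.idx 0).val, hpp _⟩ : Fin (e.n + 1)) = 0 from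
            Fin.ext (by simp)]
          rw [TL.sat_Gm_iff]
          intro s hs
          rw [QF.toTL_sat]
          exact hlo s hs
    · rintro ⟨hfut, hpast⟩
      obtain ⟨hAk, hF⟩ := hfut
      obtain ⟨-, hP⟩ := hpast
      obtain ⟨u, hu0, hult, huA, huB, hutail⟩ := futIff.mp hF
      obtain ⟨v, hv0, hvlt, hvA, hvB, hvtail⟩ := pastIff.mp hP
      set k := (e.idx 0).val with hkdef
      refine ⟨fun j => if j.val < k then v (k - j.val) else u (j.val - k),
        ?_, ?_, ?_, ?_, ?_, ?_⟩
      · -- StrictMono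
        rw [Fin.strictMono_iff_lt_succ]
        intro j
        simp only [Fin.coe_castSucc, Fin.val_succ]
        rcases lt_trichotomy (j.val + 1) k with h | h | h
        · rw [if_pos (by omega), if_pos (by omega)]
          have h1 := hvlt (k - j.val - 1) (by omega)
          rw [show k - j.val - 1 + 1 = k - j.val by omega] at h1
          rw [show k - (j.val + 1) = k - j.val - 1 by omega]
          exact h1
        · rw [if_pos (by omega), if_neg (by omega)]
          have h1 := hvlt 0 (by omega)
          rw [hv0] at h1
          rw [show k - j.val = 0 + 1 by omega, show j.val + 1 - k = 0 by omega, hu0]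
          exact h1
        · rw [if_neg (by omega), if_neg (by omega)]
          have h1 := hult (j.val - k) (by omega)
          rw [show j.val + 1 - k = j.val - k + 1 by omega]
          exact h1
      · -- z condition
        intro k'
        rw [Fin.fin_one_eq_zero k']
        dsimp only
        rw [← hkdef, if_neg (by omega), Nat.sub_self, hu0]
      · -- α conditions
        intro j
        dsimp only
        rcases lt_trichotomy j.val k with h | h | h
        · rw [if_pos h]
          have hA := hvA (k - 1 - j.val) (by omega)
          dsimp only at hA
          rw [show k - 1 - j.val + 1 = k - j.val by omega,
            show k - 1 - (k - 1 - j.val) = j.val by omega] at hA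
          simp only [EAForm.aExt, dif_pos j.isLt, QF.toTL_sat] at hA
          exact hA
        · rw [if_neg (by omega), show j.val - k = 0 by omega, hu0]
          have h1 : k < e.n + 1 := by omega
          simp only [EAForm.aExt, dif_pos h1, QF.toTL_sat] at hAk
          have : j = ⟨k, h1⟩ := Fin.ext h
          rw [this]
          exact hAk
        · rw [if_neg (by omega)]
          have hA := huA (j.val - k - 1) (by omega)
          dsimp only at hA
          rw [show k + (j.val - k - 1) + 1 = j.val by omega,
            show j.val - k - 1 + 1 = j.val - k by omega] at hA
          simp only [EAForm.aExt, dif_pos j.isLt, QF.toTL_sat] at hA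
          exact hA
      · -- β interval conditions
        intro j y h1 h2
        dsimp only at h1 h2
        simp only [Fin.coe_castSucc, Fin.val_succ] at h1 h2
        rcases le_or_gt (j.val + 1) k with hle | hgt
        · rw [if_pos (by omega)] at h1
          have h2' : y < v (k - (j.val + 1)) := by
            rcases lt_or_eq_of_le hle with hlt2 | heq
            · rwa [if_pos hlt2] at h2
            · rw [if_neg (by omega), show j.val + 1 - k = 0 by omega, hu0] at h2
              rwa [show k - (j.val + 1) = 0 by omega, hv0]
          have hB := hvB (k - 1 - j.val) (by omega) y
          dsimp only at hB
          rw [show k - 1 - j.val + 1 = k - j.val by omega,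
            show k - 1 - (k - 1 - j.val) = j.val by omega] at hB
          have hB' := hB h1 (by rwa [show k - 1 - j.val = k - (j.val + 1) by omega])
          simp only [EAForm.bExt, dif_pos j.isLt, QF.toTL_sat] at hB'
          exact hB'
        · rw [if_neg (by omega)] at h1
          rw [if_neg (by omega), show j.val + 1 - k = j.val - k + 1 by omega] at h2
          have hB := huB (j.val - k) (by omega) y
          dsimp only at hB
          rw [show k + (j.val - k) = j.val by omega] at hB
          have hB' := hB h1 h2
          simp only [EAForm.bExt, dif_pos j.isLt, QF.toTL_sat] at hB'
          exact hB'
      · -- βlo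
        intro y hy
        dsimp only at hy
        rw [Fin.val_zero] at hy
        have hy' : y < v k := by
          rcases Nat.eq_zero_or_pos k with h0 | h0
          · rw [if_neg (by omega), show 0 - k = 0 by omega, hu0] at hy
            rw [h0, hv0]
            exact hy
          · rwa [if_pos h0, Nat.sub_zero] at hy
        rw [TL.sat_Gm_iff] at hvtail
        have := hvtail y hy'
        rwa [QF.toTL_sat] at this
      · -- βhi
        intro y hy
        dsimp only at hy
        simp only [Fin.val_last] at hy
        rw [if_neg (by omega)] at hy
        rw [TL.sat_G_iff] at hutail
        have := hutail y hy
        rwa [QF.toTL_sat] at this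
  exact ⟨⟨e.futureTL.and e.pastTL, fun T _ I t => (main T I t).trans Iff.rfl⟩, main⟩
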